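/- arXiv:1211.2301 — 4 statements merged into one kernel-verified Lean document; each statement's English description precedes it below -/
import Mathlib

section
/- Let e be a transitive relation on a set E and let (a,b,U) ∈ F(e). Then p = ⟨a,b,U⟩ is a clopen subset of e containing the pair (a,b); moreover the set p₋ is clopen, and every open subset u of e with u ⊊ p satisfies u ⊆ p₋. -/
/-- A binary relation (as a set of pairs) is transitive. -/
def TransRel {E : Type*} (a : Set (E × E)) : Prop :=
  ∀ x y z : E, (x, y) ∈ a → (y, z) ∈ a → (x, z) ∈ a

/-- The transitive closure of a set of pairs. -/
def tcl {E : Type*} (a : Set (E × E)) : Set (E × E) :=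
  {p | Relation.TransGen (fun u v => (u, v) ∈ a) p.1 p.2}

/-- The interior of `a` relative to `e`. -/
def tint {E : Type*} (e a : Set (E × E)) : Set (E × E) :=
  e \ tcl (e \ a)

/-- `a` is a closed subset of `e`. -/
def IsClosedIn {E : Type*} (e a : Set (E × E)) : Prop :=
  a ⊆ e ∧ TransRel a

/-- `a` is an open subset of `e`. -/
def IsOpenIn {E : Type*} (e a : Set (E × E)) : Prop :=
  a ⊆ e ∧ TransRel (e \ a)

/-- `a` is a clopen subset of `e`. -/
def IsClopenIn {E : Type*} (e a : Set (E × E)) : Prop :=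
  a ⊆ e ∧ TransRel a ∧ TransRel (e \ a)

/-- `a` is a regular closed subset of `e`. -/
def RegClosed {E : Type*} (e a : Set (E × E)) : Prop :=
  a ⊆ e ∧ a = tcl (tint e a)

/-- The reflexive preordering `x ⊴ y` associated with `e`. -/
def rle {E : Type*} (e : Set (E × E)) (x y : E) : Prop :=
  (x, y) ∈ e ∨ x = y

/-- `x ≡ y`: `x ⊴ y` and `y ⊴ x`. -/
def eqv {E : Type*} (e : Set (E × E)) (x y : E) : Prop :=
  rle e x y ∧ rle e y x

/-- `e` is square-free. -/
def SqFree {E : Type*} (e : Set (E × E)) : Prop :=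
  ∀ a b x y : E, (a, b) ∈ e → rle e a x → rle e x b → rle e a y → rle e y b →
    rle e x y ∨ rle e y x

/-- The interval `[a,b] = {x | a ⊴ x ⊴ b}`. -/
def cce {E : Type*} (e : Set (E × E)) (a b : E) : Set E :=
  {x | rle e a x ∧ rle e x b}

/-- `(a,b,U) ∈ F(e)`. -/
def Ftriple {E : Type*} (e : Set (E × E)) (a b : E) (U : Set E) : Prop :=
  (a, b) ∈ e ∧ U ⊆ cce e a b ∧ (a ≠ b → a ∉ U ∧ b ∈ U)

/-- The clopen set `⟨a,b,U⟩ = e ∩ (({a} ∪ Uᶜ) × ({b} ∪ U))`. -/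
def pji {E : Type*} (e : Set (E × E)) (a b : E) (U : Set E) : Set (E × E) :=
  e ∩ ((({a} : Set E) ∪ (cce e a b \ U)) ×ˢ (({b} : Set E) ∪ U))

/-- The set `p₋` associated with `p = ⟨a,b,U⟩`: if `a ≠ b` it is
`p \ ([a] × [b])`, and if `a = b` it is `p \ {(a,a)}`. -/
def pminus {E : Type*} (e : Set (E × E)) (a b : E) (U : Set E) : Set (E × E) :=
  {z ∈ pji e a b U | ¬ ((a ≠ b ∧ eqv e z.1 a ∧ eqv e z.2 b) ∨ (a = b ∧ z = (a, a)))}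

/-- for `(a,b,U) ∈ F(e)`, the set `p = ⟨a,b,U⟩` is clopen and contains `(a,b)`;
moreover `p₋` is clopen and every open `u ⊊ p` satisfies `u ⊆ p₋`. -/
theorem pji_clopen_pminus {E : Type*} (e : Set (E × E)) (he : TransRel e)
    (a b : E) (U : Set E) (hF : Ftriple e a b U) :
    IsClopenIn e (pji e a b U) ∧ (a, b) ∈ pji e a b U ∧
    IsClopenIn e (pminus e a b U) ∧
    (∀ u : Set (E × E), IsOpenIn e u → u ⊂ pji e a b U → u ⊆ pminus e a b U) := by
  obtain ⟨hab, hU, hftop⟩ := hF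
  have rrefl : ∀ x : E, rle e x x := fun x => Or.inr rfl
  have comp1 : ∀ x y z : E, rle e x y → (y, z) ∈ e → (x, z) ∈ e := by
    rintro x y z (h | rfl) h2
    · exact he _ _ _ h h2
    · exact h2
  have comp2 : ∀ x y z : E, (x, y) ∈ e → rle e y z → (x, z) ∈ e := by
    rintro x y z h1 (h | rfl)
    · exact he _ _ _ h1 h
    · exact h1
  have rtrans : ∀ x y z : E, rle e x y → rle e y z → rle e x z := by
    rintro x y z (h | rfl) h2
    · exact Or.inl (comp2 _ _ _ h h2)
    · exact h2
  have memp : ∀ x y : E, (x, y) ∈ pji e a b U ↔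
      (x, y) ∈ e ∧ (x = a ∨ (x ∈ cce e a b ∧ x ∉ U)) ∧ (y = b ∨ y ∈ U) := by
    intro x y; simp [pji, Set.mem_diff]
  have memm : ∀ x y : E, (x, y) ∈ pminus e a b U ↔ (x, y) ∈ pji e a b U ∧
      ¬ ((a ≠ b ∧ eqv e x a ∧ eqv e y b) ∨ (a = b ∧ (x, y) = (a, a))) := fun _ _ => Iff.rfl
  have hA : ∀ x : E, (x = a ∨ (x ∈ cce e a b ∧ x ∉ U)) → rle e a x ∧ rle e x b := by
    rintro x (rfl | ⟨⟨h1, h2⟩, _⟩)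
    · exact ⟨rrefl x, Or.inl hab⟩
    · exact ⟨h1, h2⟩
  have hB : ∀ y : E, (y = b ∨ y ∈ U) → rle e a y ∧ rle e y b := by
    rintro y (rfl | h)
    · exact ⟨Or.inl hab, rrefl y⟩
    · exact hU h
  have hpe : pji e a b U ⊆ e := fun z hz => hz.1
  have hclosed : TransRel (pji e a b U) := by
    intro x y z hxy hyz
    obtain ⟨hxye, hxA, _⟩ := (memp x y).1 hxy
    obtain ⟨hyze, _, hzB⟩ := (memp y z).1 hyz
    exact (memp x z).2 ⟨he _ _ _ hxye hyze, hxA, hzB⟩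
  have hopen : TransRel (e \ pji e a b U) := by
    rintro x y z ⟨hxy, hxy'⟩ ⟨hyz, hyz'⟩
    refine ⟨he _ _ _ hxy hyz, fun hxz => ?_⟩
    obtain ⟨hxze, hxA, hzB⟩ := (memp x z).1 hxz
    have hyB : ¬(y = b ∨ y ∈ U) := fun h => hxy' ((memp x y).2 ⟨hxy, hxA, h⟩)
    have hyA : ¬(y = a ∨ (y ∈ cce e a b ∧ y ∉ U)) :=
      fun h => hyz' ((memp y z).2 ⟨hyz, h, hzB⟩)
    have h1 := comp1 a x y (hA x hxA).1 hxy
    have h2 := comp2 y z b hyz (hB z hzB).2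
    exact hyA (Or.inr ⟨⟨Or.inl h1, Or.inl h2⟩, fun hu => hyB (Or.inr hu)⟩)
  have habp : (a, b) ∈ pji e a b U := (memp a b).2 ⟨hab, Or.inl rfl, Or.inl rfl⟩
  have hmp : pminus e a b U ⊆ pji e a b U := fun z hz => hz.1
  -- p₋ is closed
  have hmclosed : TransRel (pminus e a b U) := by
    intro x y z hxy hyz
    obtain ⟨hxyp, hxyr⟩ := (memm x y).1 hxy
    obtain ⟨hyzp, hyzr⟩ := (memm y z).1 hyz
    refine (memm x z).2 ⟨hclosed _ _ _ hxyp hyzp, ?_⟩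
    obtain ⟨_, _, hyB⟩ := (memp x y).1 hxyp
    obtain ⟨_, hyA, _⟩ := (memp y z).1 hyzp
    rintro (⟨hne, hxa, hzb⟩ | ⟨heq, hxz⟩)
    · rcases hyB with rfl | hyU
      · exact hxyr (Or.inl ⟨hne, hxa, ⟨rrefl y, rrefl y⟩⟩)
      · rcases hyA with rfl | ⟨_, hyU'⟩
        · exact hyzr (Or.inl ⟨hne, ⟨rrefl y, rrefl y⟩, hzb⟩)
        · exact hyU' hyU
    · rw [Prod.mk.injEq] at hxz
      obtain ⟨hx1, hz1⟩ := hxz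
      rcases hyA with hy1 | ⟨_, hyU'⟩
      · exact hxyr (Or.inr ⟨heq, by rw [hx1, hy1]⟩)
      · rcases hyB with hy1 | hyU
        · exact hxyr (Or.inr ⟨heq, by rw [hx1, hy1, heq]⟩)
        · exact hyU' hyU
  -- p₋ is open
  have hmopen : TransRel (e \ pminus e a b U) := by
    rintro x y z ⟨hxy, hxy'⟩ ⟨hyz, hyz'⟩
    refine ⟨he _ _ _ hxy hyz, fun hxzm => ?_⟩
    obtain ⟨hxzp, hxzr⟩ := (memm x z).1 hxzm
    obtain ⟨hxze, hxA, hzB⟩ := (memp x z).1 hxzp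
    by_cases hP1 : (x, y) ∈ pji e a b U
    · -- (x,y) must be removed
      have hrem : (a ≠ b ∧ eqv e x a ∧ eqv e y b) ∨ (a = b ∧ (x, y) = (a, a)) := by
        by_contra h; exact hxy' ((memm x y).2 ⟨hP1, h⟩)
      rcases hrem with ⟨hne, hxa, hyb⟩ | ⟨heq, hxy2⟩
      · -- z ≡ b, so (x,z) removed
        have hbz : (b, z) ∈ e := comp1 b y z hyb.2 hyz
        exact hxzr (Or.inl ⟨hne, hxa, ⟨(hB z hzB).2, Or.inl hbz⟩⟩)
      · rw [Prod.mk.injEq] at hxy2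
        obtain ⟨hx1, hy1⟩ := hxy2
        -- (y, z) ∈ p, hence removed, so z = a
        have haz : (y, z) ∈ pji e a b U := (memp y z).2 ⟨hyz, Or.inl hy1, hzB⟩
        have hrem2 : (a ≠ b ∧ eqv e y a ∧ eqv e z b) ∨ (a = b ∧ (y, z) = (a, a)) := by
          by_contra h; exact hyz' ((memm y z).2 ⟨haz, h⟩)
        rcases hrem2 with ⟨hne, _⟩ | ⟨_, hz2⟩
        · exact hne heq
        · rw [Prod.mk.injEq] at hz2
          exact hxzr (Or.inr ⟨heq, by rw [hx1, hz2.2]⟩)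
    · by_cases hP2 : (y, z) ∈ pji e a b U
      · have hrem : (a ≠ b ∧ eqv e y a ∧ eqv e z b) ∨ (a = b ∧ (y, z) = (a, a)) := by
          by_contra h; exact hyz' ((memm y z).2 ⟨hP2, h⟩)
        rcases hrem with ⟨hne, hya, hzb⟩ | ⟨heq, hyz2⟩
        · have hxa : (x, a) ∈ e := comp2 x y a hxy hya.1
          exact hxzr (Or.inl ⟨hne, ⟨Or.inl hxa, (hA x hxA).1⟩, hzb⟩)
        · rw [Prod.mk.injEq] at hyz2
          obtain ⟨hy1, hz1⟩ := hyz2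
          have hxa : (x, y) ∈ pji e a b U :=
            (memp x y).2 ⟨hxy, hxA, Or.inl (hy1.trans heq)⟩
          have hrem2 : (a ≠ b ∧ eqv e x a ∧ eqv e y b) ∨ (a = b ∧ (x, y) = (a, a)) := by
            by_contra h; exact hxy' ((memm x y).2 ⟨hxa, h⟩)
          rcases hrem2 with ⟨hne, _⟩ | ⟨_, hx2⟩
          · exact hne heq
          · rw [Prod.mk.injEq] at hx2
            exact hxzr (Or.inr ⟨heq, by rw [hx2.1, hz1]⟩)
      · exact (hopen x y z ⟨hxy, hP1⟩ ⟨hyz, hP2⟩).2 hxzp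
  refine ⟨⟨hpe, hclosed, hopen⟩, habp, ⟨fun z hz => hpe (hmp hz), hmclosed, hmopen⟩, ?_⟩
  -- part 4
  rintro u ⟨hue, huopen⟩ ⟨husub, hne'⟩
  obtain ⟨⟨s, t⟩, hstp, hstu⟩ := Set.not_subset.1 hne'
  have hste : (s, t) ∈ e := hpe hstp
  obtain ⟨_, hsA, htB⟩ := (memp s t).1 hstp
  have split : ∀ x y : E, rle e x y → x = y ∨ ((x, y) ∈ e ∧ x ≠ y) := by
    intro x y h
    by_cases hxy : x = y
    · exact Or.inl hxy
    · exact Or.inr ⟨h.resolve_right hxy, hxy⟩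
  have step1 : ∀ x y z : E, (x = y ∨ ((x, y) ∈ e ∧ (x, y) ∉ u)) →
      (y, z) ∈ e ∧ (y, z) ∉ u → (x, z) ∈ e ∧ (x, z) ∉ u := by
    rintro x y z (rfl | h1) h2
    · exact h2
    · exact huopen x y z h1 h2
  have step2 : ∀ x y z : E, (x, y) ∈ e ∧ (x, y) ∉ u →
      (y = z ∨ ((y, z) ∈ e ∧ (y, z) ∉ u)) → (x, z) ∈ e ∧ (x, z) ∉ u := by
    rintro x y z h1 (rfl | h2)
    · exact h1
    · exact huopen x y z h1 h2
  rintro ⟨x, z⟩ hxzu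
  refine (memm x z).2 ⟨husub hxzu, ?_⟩
  rintro (⟨hne, hxa, hzb⟩ | ⟨heq, hxz⟩)
  · -- case a ≠ b : x ≡ a, z ≡ b, but (x,z) ∈ u
    have hxs : rle e x s := rtrans x a s hxa.1 (hA s hsA).1
    have htz : rle e t z := rtrans t b z (hB t htB).2 hzb.2
    have hxsu : (x, s) ∉ u := by
      intro h
      obtain ⟨_, _, hsB⟩ := (memp x s).1 (husub h)
      rcases hsA with rfl | ⟨_, hsU⟩
      · rcases hsB with h' | h'
        · exact hne h'
        · exact (hftop hne).1 h'
      · rcases hsB with rfl | h'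
        · exact hsU (hftop hne).2
        · exact hsU h'
    have htzu : (t, z) ∉ u := by
      intro h
      obtain ⟨_, htA, _⟩ := (memp t z).1 (husub h)
      rcases htB with rfl | htU
      · rcases htA with h' | ⟨_, h'⟩
        · exact hne h'.symm
        · exact h' (hftop hne).2
      · rcases htA with rfl | ⟨_, h'⟩
        · exact (hftop hne).1 htU
        · exact h' htU
    have c1 : (x, t) ∈ e ∧ (x, t) ∉ u := by
      refine step1 x s t ?_ ⟨hste, hstu⟩
      rcases split x s hxs with h | ⟨h1, _⟩
      · exact Or.inl h
      · exact Or.inr ⟨h1, hxsu⟩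
    have c2 : (x, z) ∈ e ∧ (x, z) ∉ u := by
      refine step2 x t z c1 ?_
      rcases split t z htz with h | ⟨h1, _⟩
      · exact Or.inl h
      · exact Or.inr ⟨h1, htzu⟩
    exact c2.2 hxzu
  · -- case a = b : (x,z) = (a,a) ∈ u
    rw [Prod.mk.injEq] at hxz
    obtain ⟨hx1, hz1⟩ := hxz
    rw [hx1, hz1] at hxzu
    have has : rle e a s := (hA s hsA).1
    have hta : rle e t a := by rw [heq]; exact (hB t htB).2
    have hasu : (a, s) ∈ e → a ≠ s → (a, s) ∉ u := by
      intro h hxs hin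
      obtain ⟨_, _, hsB⟩ := (memp a s).1 (husub hin)
      rcases hsA with rfl | ⟨_, hsU'⟩
      · exact hxs rfl
      · rcases hsB with rfl | hsU
        · exact hxs heq
        · exact hsU' hsU
    have htau : (t, a) ∈ e → t ≠ a → (t, a) ∉ u := by
      intro h htx hin
      obtain ⟨_, htA, _⟩ := (memp t a).1 (husub hin)
      rcases htA with rfl | ⟨_, htU'⟩
      · exact htx rfl
      · rcases htB with rfl | htU
        · exact htx heq.symm
        · exact htU' htU
    have c1 : (a, t) ∈ e ∧ (a, t) ∉ u := by
      refine step1 a s t ?_ ⟨hste, hstu⟩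
      rcases split a s has with h | ⟨h1, h2⟩
      · exact Or.inl h
      · exact Or.inr ⟨h1, hasu h1 h2⟩
    have c2 : (a, a) ∈ e ∧ (a, a) ∉ u := by
      refine step2 a t a c1 ?_
      rcases split t a hta with h | ⟨h1, h2⟩
      · exact Or.inl h
      · exact Or.inr ⟨h1, htau h1 h2⟩
    exact c2.2 hxzu
end

section
/- Let e be a transitive relation on a set E and let (a,b,U) ∈ F(e). Then every regular closed subset x of e with x ⊊ ⟨a,b,U⟩ satisfies x ⊆ p₋, where p₋ is the set associated to p = ⟨a,b,U⟩; hence ⟨a,b,U⟩ is a completely join-irreducible element of the lattice Reg(e), and p₋ is its unique lower cover in Reg(e). -/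
/- ### Auxiliary lemmas -/

theorem tcl_of_trans {E : Type*} {a : Set (E × E)} (h : TransRel a) : tcl a = a := by
  have ht : Transitive (fun u v : E => (u, v) ∈ a) := fun x y z hxy hyz => h x y z hxy hyz
  ext ⟨x, y⟩
  haveI : IsTrans E (fun u v : E => (u, v) ∈ a) := ⟨fun x y z => @ht x y z⟩
  simp only [tcl, Set.mem_setOf_eq, Relation.transGen_eq_self]

theorem regClosed_of_clopen {E : Type*} {e a : Set (E × E)} (h : IsClopenIn e a) :
    RegClosed e a := by
  obtain ⟨hsub, hta, htc⟩ := h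
  refine ⟨hsub, ?_⟩
  rw [tint, tcl_of_trans htc, Set.diff_diff_cancel_left hsub, tcl_of_trans hta]

theorem rle_trans' {E : Type*} {e : Set (E × E)} (he : TransRel e) {x y z : E}
    (h1 : rle e x y) (h2 : rle e y z) : rle e x z := by
  rcases h1 with h1 | rfl
  · rcases h2 with h2 | rfl
    · exact Or.inl (he x y z h1 h2)
    · exact Or.inl h1
  · exact h2

theorem lt_of_rle_lt {E : Type*} {e : Set (E × E)} (he : TransRel e) {x y z : E}
    (h1 : rle e x y) (h2 : (y, z) ∈ e) : (x, z) ∈ e := by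
  rcases h1 with h1 | rfl
  · exact he x y z h1 h2
  · exact h2

theorem lt_of_lt_rle {E : Type*} {e : Set (E × E)} (he : TransRel e) {x y z : E}
    (h1 : (x, y) ∈ e) (h2 : rle e y z) : (x, z) ∈ e := by
  rcases h2 with h2 | rfl
  · exact he x y z h1 h2
  · exact h1

theorem mem_pji_iff {E : Type*} {e : Set (E × E)} {a b : E} {U : Set E} {u v : E} :
    (u, v) ∈ pji e a b U ↔
      (u, v) ∈ e ∧ (u ∈ ({a} : Set E) ∪ (cce e a b \ U)) ∧ (v ∈ ({b} : Set E) ∪ U) := by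
  simp [pji, Set.mem_prod, and_assoc]

theorem fst_rle {E : Type*} {e : Set (E × E)} {a b : E} {U : Set E} {u : E}
    (h : u ∈ ({a} : Set E) ∪ (cce e a b \ U)) : rle e a u := by
  rcases h with h | h
  · exact Or.inr h.symm
  · exact h.1.1

theorem snd_rle {E : Type*} {e : Set (E × E)} {a b : E} {U : Set E} (hF : Ftriple e a b U)
    {v : E} (h : v ∈ ({b} : Set E) ∪ U) : rle e v b := by
  rcases h with h | h
  · exact Or.inr h
  · exact (hF.2.1 h).2

/-- A vertex which is both a right end and a left end of pairs of `⟨a,b,U⟩`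
must be `a`, and then `a = b`. -/
theorem mid_mem {E : Type*} {e : Set (E × E)} {a b : E} {U : Set E} (hF : Ftriple e a b U)
    {w : E} (h1 : w ∈ ({b} : Set E) ∪ U) (h2 : w ∈ ({a} : Set E) ∪ (cce e a b \ U)) :
    a = b ∧ w = a := by
  rcases h1 with h1 | h1 <;> rcases h2 with h2 | h2
  · exact ⟨(h2.symm.trans h1).symm ▸ rfl, h2⟩
  · by_cases hab : a = b
    · exact ⟨hab, h1.trans hab.symm⟩
    · exact absurd ((hF.2.2 hab).2) (h1 ▸ h2.2)
  · by_cases hab : a = b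
    · exact ⟨hab, h2⟩
    · exact absurd (h2 ▸ h1) (hF.2.2 hab).1
  · exact absurd h1 h2.2

theorem pji_clopen {E : Type*} {e : Set (E × E)} (he : TransRel e) {a b : E} {U : Set E}
    (hF : Ftriple e a b U) : IsClopenIn e (pji e a b U) := by
  refine ⟨Set.inter_subset_left, ?_, ?_⟩
  · intro x y z hxy hyz
    rw [mem_pji_iff] at hxy hyz ⊢
    exact ⟨he x y z hxy.1 hyz.1, hxy.2.1, hyz.2.2⟩
  · intro x y z hxy hyz
    refine ⟨he x y z hxy.1 hyz.1, fun hxz => ?_⟩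
    obtain ⟨hxze, hx, hz⟩ := mem_pji_iff.mp hxz
    have hay : rle e a y := Or.inl (lt_of_rle_lt he (fst_rle hx) hxy.1)
    have hyb : rle e y b := Or.inl (lt_of_lt_rle he hyz.1 (snd_rle hF hz))
    by_cases hyU : y ∈ U
    · exact hxy.2 (mem_pji_iff.mpr ⟨hxy.1, hx, Or.inr hyU⟩)
    · exact hyz.2 (mem_pji_iff.mpr ⟨hyz.1, Or.inr ⟨⟨hay, hyb⟩, hyU⟩, hz⟩)

theorem mem_pminus_iff {E : Type*} {e : Set (E × E)} {a b : E} {U : Set E} {u v : E} :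
    (u, v) ∈ pminus e a b U ↔ (u, v) ∈ pji e a b U ∧
      ¬ ((a ≠ b ∧ eqv e u a ∧ eqv e v b) ∨ (a = b ∧ (u, v) = (a, a))) :=
  Iff.rfl

theorem rle_refl {E : Type*} (e : Set (E × E)) (x : E) : rle e x x := Or.inr rfl

theorem pminus_clopen {E : Type*} {e : Set (E × E)} (he : TransRel e) {a b : E} {U : Set E}
    (hF : Ftriple e a b U) : IsClopenIn e (pminus e a b U) := by
  have hsub : pminus e a b U ⊆ pji e a b U := fun z hz => hz.1
  refine ⟨fun z hz => (hsub hz).1, ?_, ?_⟩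
  · -- closed
    intro x y z hxy hyz
    rw [mem_pminus_iff] at hxy hyz ⊢
    have hxzp : (x, z) ∈ pji e a b U := by
      rw [mem_pji_iff] at *
      exact ⟨he x y z (mem_pji_iff.mp hxy.1).1 (mem_pji_iff.mp hyz.1).1,
        (mem_pji_iff.mp hxy.1).2.1, (mem_pji_iff.mp hyz.1).2.2⟩
    refine ⟨hxzp, ?_⟩
    rintro (⟨hab, hxa, hzb⟩ | ⟨hab, hxz⟩)
    · obtain ⟨hab', -⟩ := mid_mem hF (mem_pji_iff.mp hxy.1).2.2 (mem_pji_iff.mp hyz.1).2.1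
      exact hab hab'
    · obtain ⟨-, hya⟩ := mid_mem hF (mem_pji_iff.mp hxy.1).2.2 (mem_pji_iff.mp hyz.1).2.1
      have hx : x = a := congrArg Prod.fst hxz
      exact hxy.2 (Or.inr ⟨hab, by rw [hx, hya]⟩)
  · -- open
    intro x y z hxy hyz
    refine ⟨he x y z hxy.1 hyz.1, fun hxz => ?_⟩
    rw [mem_pminus_iff] at hxz
    have hxzp := mem_pji_iff.mp hxz.1
    by_cases hxyp : (x, y) ∈ pji e a b U
    · -- the pair (x,y) is in p but not p₋ : it is "bad"
      have hbad : (a ≠ b ∧ eqv e x a ∧ eqv e y b) ∨ (a = b ∧ (x, y) = (a, a)) := by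
        by_contra h
        exact hxy.2 (mem_pminus_iff.mpr ⟨hxyp, h⟩)
      rcases hbad with ⟨hab, hxa, hyb⟩ | ⟨hab, hxy'⟩
      · -- a ≠ b, x ≡ a, y ≡ b; then z ≡ b, contradicting (x,z) ∈ p₋
        have hzb : eqv e z b := by
          rcases hxzp.2.2 with hz | hz
          · rw [show z = b from hz]; exact ⟨rle_refl e b, rle_refl e b⟩
          · exact ⟨(hF.2.1 hz).2, Or.inl (lt_of_rle_lt he hyb.2 hyz.1)⟩
        exact hxz.2 (Or.inl ⟨hab, hxa, hzb⟩)
      · -- a = b, (x,y) = (a,a): then (y,z) = (x,z), contradiction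
        have hx : x = a := congrArg Prod.fst hxy'
        have hy : y = a := congrArg Prod.snd hxy'
        exact hyz.2 ((hy.trans hx.symm) ▸ mem_pminus_iff.mpr hxz)
    · by_cases hyzp : (y, z) ∈ pji e a b U
      · have hbad : (a ≠ b ∧ eqv e y a ∧ eqv e z b) ∨ (a = b ∧ (y, z) = (a, a)) := by
          by_contra h
          exact hyz.2 (mem_pminus_iff.mpr ⟨hyzp, h⟩)
        rcases hbad with ⟨hab, hya, hzb⟩ | ⟨hab, hyz'⟩
        · -- a ≠ b, y ≡ a, z ≡ b; then x ≡ a, contradicting (x,z) ∈ p₋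
          have hxa : eqv e x a := by
            rcases hxzp.2.1 with hx | hx
            · rw [show x = a from hx]; exact ⟨rle_refl e a, rle_refl e a⟩
            · exact ⟨Or.inl (lt_of_lt_rle he hxy.1 hya.1), hx.1.1⟩
          exact hxz.2 (Or.inl ⟨hab, hxa, hzb⟩)
        · have hy : y = a := congrArg Prod.fst hyz'
          have hz : z = a := congrArg Prod.snd hyz'
          exact hxy.2 ((hz.trans hy.symm) ▸ mem_pminus_iff.mpr hxz)
      · -- neither (x,y) nor (y,z) in p : derive y ∈ [a,b], contradiction
        have hay : rle e a y := Or.inl (lt_of_rle_lt he (fst_rle hxzp.2.1) hxy.1)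
        have hyb : rle e y b := Or.inl (lt_of_lt_rle he hyz.1 (snd_rle hF hxzp.2.2))
        by_cases hyU : y ∈ U
        · exact hxyp (mem_pji_iff.mpr ⟨hxy.1, hxzp.2.1, Or.inr hyU⟩)
        · exact hyzp (mem_pji_iff.mpr ⟨hyz.1, Or.inr ⟨⟨hay, hyb⟩, hyU⟩, hxzp.2.2⟩)

theorem tint_subset {E : Type*} {e x : Set (E × E)} (_hx : x ⊆ e) : tint e x ⊆ x := by
  rintro ⟨u, v⟩ ⟨hue, hnc⟩
  by_contra h
  exact hnc (Relation.TransGen.single ⟨hue, h⟩)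

/-- Chains within a subset of `⟨a,b,U⟩` collapse. -/
theorem chain_in_pji {E : Type*} {e : Set (E × E)} {a b : E} {U : Set E}
    (hF : Ftriple e a b U) {q : Set (E × E)} (hq : q ⊆ pji e a b U) {s t : E}
    (h : (s, t) ∈ tcl q) : (s, t) ∈ q ∨ (a = b ∧ (s, a) ∈ q) := by
  change Relation.TransGen (fun u v => (u, v) ∈ q) s t at h
  induction h with
  | single h => exact Or.inl h
  | tail h1 h2 ih =>
    rcases ih with ih | ⟨hab, hsa⟩
    · obtain ⟨hab, hwa⟩ := mid_mem hF (mem_pji_iff.mp (hq ih)).2.2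
        (mem_pji_iff.mp (hq h2)).2.1
      exact Or.inr ⟨hab, hwa ▸ ih⟩
    · exact Or.inr ⟨hab, hsa⟩

/-- for `(a,b,U) ∈ F(e)`, every regular closed `x ⊊ ⟨a,b,U⟩` satisfies
`x ⊆ p₋`; hence `⟨a,b,U⟩` is completely join-irreducible in `Reg(e)` with unique lower
cover `p₋`. -/
theorem pji_completelyJoinIrreducible {E : Type*} (e : Set (E × E)) (he : TransRel e)
    (a b : E) (U : Set E) (hF : Ftriple e a b U) :
    RegClosed e (pji e a b U) ∧ RegClosed e (pminus e a b U) ∧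
    pminus e a b U ⊂ pji e a b U ∧
    (∀ x : Set (E × E), RegClosed e x → x ⊂ pji e a b U → x ⊆ pminus e a b U) := by
  have habp : (a, b) ∈ pji e a b U := mem_pji_iff.mpr ⟨hF.1, Or.inl rfl, Or.inl rfl⟩
  refine ⟨regClosed_of_clopen (pji_clopen he hF),
    regClosed_of_clopen (pminus_clopen he hF), ?_, ?_⟩
  · -- pminus ⊂ pji
    refine ⟨fun z hz => hz.1, fun h => ?_⟩
    have := (h habp).2
    by_cases hab : a = b
    · exact this (Or.inr ⟨hab, by rw [hab]⟩)
    · exact this (Or.inl ⟨hab, ⟨rle_refl e a, rle_refl e a⟩, ⟨rle_refl e b, rle_refl e b⟩⟩)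
  · -- the main part
    intro x hx hlt
    rintro ⟨c, d⟩ hz
    by_contra hzm
    have hxp : x ⊆ pji e a b U := hlt.1
    have hzp : (c, d) ∈ pji e a b U := hxp hz
    have hbad : (a ≠ b ∧ eqv e c a ∧ eqv e d b) ∨ (a = b ∧ (c, d) = (a, a)) := by
      by_contra h
      exact hzm (mem_pminus_iff.mpr ⟨hzp, h⟩)
    have hca : rle e c a := by
      rcases hbad with ⟨-, hca, -⟩ | ⟨-, h⟩
      · exact hca.1
      · have hc : c = a := congrArg Prod.fst h
        exact hc ▸ rle_refl e a
    have hbd : rle e b d := by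
      rcases hbad with ⟨-, -, hdb⟩ | ⟨hab, h⟩
      · exact hdb.2
      · have hd : d = a := congrArg Prod.snd h
        rw [hd, hab]; exact rle_refl e b
    -- (c,d) ∈ tint e x
    have hq : tint e x ⊆ pji e a b U := (tint_subset hx.1).trans hxp
    have hcd_int : (c, d) ∈ tint e x := by
      have hz' : (c, d) ∈ tcl (tint e x) := hx.2 ▸ hz
      rcases chain_in_pji hF hq hz' with h | ⟨hab, h⟩
      · exact h
      · rcases hbad with ⟨hab', -⟩ | ⟨-, hcd⟩
        · exact absurd hab hab'
        · have hd : d = a := congrArg Prod.snd hcd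
          exact hd ▸ h
    -- every element of pji is in x
    have hpx : pji e a b U ⊆ x := by
      rintro ⟨u, v⟩ huv
      rw [mem_pji_iff] at huv
      obtain ⟨huve, hu, hv⟩ := huv
      have hau : rle e a u := fst_rle hu
      have hvb : rle e v b := snd_rle hF hv
      have huv_int : (u, v) ∈ tint e x := by
        refine ⟨huve, fun hchain => ?_⟩
        -- build a chain from c to d in e \ x
        have hstep1 : c ≠ u → (c, u) ∈ e \ x := by
          intro hne
          have hcu : (c, u) ∈ e := by
            rcases rle_trans' he hca hau with h | h
            · exact h
            · exact absurd h hne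
          refine ⟨hcu, fun hmem => ?_⟩
          have := mem_pji_iff.mp (hxp hmem)
          obtain ⟨hab, hua⟩ := mid_mem hF this.2.2 hu
          rcases hbad with ⟨hab', -⟩ | ⟨-, hcd⟩
          · exact hab' hab
          · have hc : c = a := congrArg Prod.fst hcd
            exact hne (hc.trans hua.symm)
        have hstep2 : v ≠ d → (v, d) ∈ e \ x := by
          intro hne
          have hvd : (v, d) ∈ e := by
            rcases rle_trans' he hvb hbd with h | h
            · exact h
            · exact absurd h hne
          refine ⟨hvd, fun hmem => ?_⟩
          have := mem_pji_iff.mp (hxp hmem)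
          obtain ⟨hab, hva⟩ := mid_mem hF hv this.2.1
          rcases hbad with ⟨hab', -⟩ | ⟨-, hcd⟩
          · exact hab' hab
          · have hd : d = a := congrArg Prod.snd hcd
            exact hne (hva.trans hd.symm)
        have hchain' : Relation.TransGen (fun p q : E => (p, q) ∈ e \ x) c d := by
          by_cases hcu : c = u
          · by_cases hvd : v = d
            · exact hcu ▸ hvd ▸ hchain
            · exact Relation.TransGen.tail (hcu ▸ hchain) (hstep2 hvd)
          · by_cases hvd : v = d
            · exact Relation.TransGen.head (hstep1 hcu) (hvd ▸ hchain)
            · exact Relation.TransGen.tail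
                (Relation.TransGen.head (hstep1 hcu) hchain) (hstep2 hvd)
        exact hcd_int.2 hchain'
      exact hx.2 ▸ Relation.TransGen.single huv_int
    exact hlt.not_subset hpx
end

section
/- Let e be a transitive relation on a set E, let (a,b,U), (c,d,V) ∈ F(e) with a ≠ b and c ≠ d, and set p = ⟨a,b,U⟩, q = ⟨c,d,V⟩, Uᶜ = [a,b] \ U, Vᶜ = [c,d] \ V. Then p ∩ q ≠ ∅ and p ∩ q₋ = ∅ if and only if [c,d] ⊆ [a,b] and ∅ ≠ e ∩ ((Uᶜ ∩ Vᶜ) × (U ∩ V)) ⊆ [c] × [d], where [c] = {x | x ≡ c} and [d] = {x | x ≡ d}. (This characterizes the arrow relation p ↗ q⊥ between completely join-irreducible and completely meet-irreducible elements of Reg(e).) -/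
/-- arrow relation `p ↗ q⊥` for bipartite `p` and `q` (cases `a ≠ b`,
`c ≠ d`). -/
theorem arrow_bipartite_bipartite {E : Type*} (e : Set (E × E)) (he : TransRel e)
    (a b c d : E) (U V : Set E) (hp : Ftriple e a b U) (hq : Ftriple e c d V)
    (hab : a ≠ b) (hcd : c ≠ d) :
    ((pji e a b U ∩ pji e c d V).Nonempty ∧ pji e a b U ∩ pminus e c d V = ∅) ↔
      (cce e c d ⊆ cce e a b ∧
        (e ∩ (((cce e a b \ U) ∩ (cce e c d \ V)) ×ˢ (U ∩ V))).Nonempty ∧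
        e ∩ (((cce e a b \ U) ∩ (cce e c d \ V)) ×ˢ (U ∩ V)) ⊆
          {x | eqv e x c} ×ˢ {y | eqv e y d}) := by
  obtain ⟨hab_e, hUsub, hU⟩ := hp
  obtain ⟨hcd_e, hVsub, hV⟩ := hq
  obtain ⟨haU, hbU⟩ := hU hab
  obtain ⟨hcV, hdV⟩ := hV hcd
  have rtrans : ∀ x y z : E, rle e x y → rle e y z → rle e x z := by
    rintro x y z (h1 | rfl) (h2 | rfl)
    · exact Or.inl (he _ _ _ h1 h2)
    · exact Or.inl h1
    · exact Or.inl h2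
    · exact Or.inr rfl
  have hpji : ∀ (a b : E) (U : Set E), (a, b) ∈ e → a ∉ U → b ∈ U →
      pji e a b U = e ∩ ((cce e a b \ U) ×ˢ U) := by
    intro a b U hab haU hbU
    have h1 : ({a} : Set E) ∪ (cce e a b \ U) = cce e a b \ U :=
      Set.union_eq_self_of_subset_left
        (Set.singleton_subset_iff.mpr ⟨⟨Or.inr rfl, Or.inl hab⟩, haU⟩)
    have h2 : ({b} : Set E) ∪ U = U :=
      Set.union_eq_self_of_subset_left (Set.singleton_subset_iff.mpr hbU)
    rw [pji, h1, h2]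
  have hP := hpji a b U hab_e haU hbU
  have hQ := hpji c d V hcd_e hcV hdV
  have hPQ : pji e a b U ∩ pji e c d V =
      e ∩ (((cce e a b \ U) ∩ (cce e c d \ V)) ×ˢ (U ∩ V)) := by
    rw [hP, hQ]
    ext ⟨x, y⟩
    simp only [Set.mem_inter_iff, Set.mem_prod]
    tauto
  constructor
  · rintro ⟨hne, hem⟩
    rw [hPQ] at hne
    have hsub : e ∩ (((cce e a b \ U) ∩ (cce e c d \ V)) ×ˢ (U ∩ V)) ⊆
        {x | eqv e x c} ×ˢ {y | eqv e y d} := by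
      rintro ⟨x, y⟩ hx
      by_contra hcon
      have hx' : (x, y) ∈ pji e a b U ∩ pji e c d V := by rw [hPQ]; exact hx
      have hz : (x, y) ∈ pji e a b U ∩ pminus e c d V := by
        refine ⟨hx'.1, hx'.2, ?_⟩
        rintro (⟨_, h1, h2⟩ | ⟨h, -⟩)
        · exact hcon ⟨h1, h2⟩
        · exact hcd h
      rw [hem] at hz
      exact hz
    refine ⟨?_, hne, hsub⟩
    obtain ⟨⟨x, y⟩, hxy⟩ := hne
    obtain ⟨hxc, hyd⟩ := hsub hxy
    obtain ⟨hexy, hxm, hym⟩ := hxy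
    intro w hw
    refine ⟨rtrans _ _ _ (rtrans _ _ _ hxm.1.1.1 hxc.1) hw.1,
      rtrans _ _ _ hw.2 (rtrans _ _ _ hyd.2 (hUsub hym.1).2)⟩
  · rintro ⟨-, hne, hsub⟩
    constructor
    · rw [hPQ]; exact hne
    · ext ⟨x, y⟩
      simp only [Set.mem_inter_iff, Set.mem_empty_iff_false, iff_false, not_and]
      intro hp' hq'
      obtain ⟨hq1, hnot⟩ := hq'
      have hxyS : (x, y) ∈ e ∩ (((cce e a b \ U) ∩ (cce e c d \ V)) ×ˢ (U ∩ V)) := by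
        rw [← hPQ]; exact ⟨hp', hq1⟩
      obtain ⟨exc, eyd⟩ := hsub hxyS
      exact hnot (Or.inl ⟨hcd, exc, eyd⟩)
end

section
/- Let n be a positive integer and let x be a bipartition of [n] = {1,…,n}. Then x has no isolated points if and only if there exists a family (U_j)_{j∈J} of nonempty proper subsets of [n] such that x is the transitive closure of ⋃_{j∈J} (([n] \ U_j) × U_j). (Equivalently, the elements of the join-subsemilattice of Bip(n) generated by the bipartite join-irreducible elements ⟨U⟩ = ([n] \ U) × U, for ∅ ≠ U ⊊ [n], are exactly the bipartitions without isolated points.) -/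
/-- A bipartition of `Fin n`: a transitive relation whose complement is transitive. -/
def IsBipartition (n : ℕ) (x : Set (Fin n × Fin n)) : Prop :=
  TransRel x ∧ TransRel (Set.univ \ x)

/-- `a` is an isolated point of the bipartition `x`. -/
def IsIsolatedPt (n : ℕ) (x : Set (Fin n × Fin n)) (a : Fin n) : Prop :=
  ∀ i : Fin n, ((a, i) ∈ x ∧ (i, a) ∈ x) ↔ i = a

lemma tcl_subset_of_trans {E : Type*} {a x : Set (E × E)} (h : a ⊆ x) (hx : TransRel x) :
    tcl a ⊆ x := by
  have key : ∀ u v : E, Relation.TransGen (fun p q => (p, q) ∈ a) u v → (u, v) ∈ x := by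
    intro u v huv
    induction huv with
    | single h' => exact h h'
    | tail _ h' ih => exact hx _ _ _ ih (h h')
  rintro ⟨p, q⟩ hp
  exact key p q hp

lemma cut_exists {n : ℕ} {x : Set (Fin n × Fin n)} (hy : TransRel (Set.univ \ x))
    {a b : Fin n} (hab : (a, b) ∈ x) (hne : a ≠ b) :
    ∃ U : Set (Fin n), U.Nonempty ∧ U ≠ Set.univ ∧ Uᶜ ×ˢ U ⊆ x ∧ a ∈ Uᶜ ∧ b ∈ U := by
  refine ⟨{i | (a, i) ∈ x ∧ i ≠ a}, ⟨b, hab, fun h => hne h.symm⟩, ?_, ?_, ?_,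
    ⟨hab, fun h => hne h.symm⟩⟩
  · intro h
    have : a ∈ ({i | (a, i) ∈ x ∧ i ≠ a} : Set (Fin n)) := h ▸ Set.mem_univ a
    exact this.2 rfl
  · rintro ⟨c, d⟩ ⟨hc, hd⟩
    simp only [Set.mem_compl_iff, Set.mem_setOf_eq, not_and, not_ne_iff] at hc hd
    by_cases hca : c = a
    · exact hca ▸ hd.1
    · have hac : (a, c) ∉ x := fun h => hca (hc h)
      by_contra hcd
      exact (hy a c d ⟨Set.mem_univ _, hac⟩ ⟨Set.mem_univ _, hcd⟩).2 hd.1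
  · exact fun h => h.2 rfl

/-- a bipartition of `[n]` has no isolated points iff it is the transitive
closure of a union of sets `Uᶜ × U` with `∅ ≠ U ⊊ [n]`, i.e., iff it belongs to the
join-subsemilattice of `Bip(n)` generated by the bipartite join-irreducible elements. -/
theorem bipartition_no_isolated_iff {n : ℕ} (hn : 0 < n)
    (x : Set (Fin n × Fin n)) (hx : IsBipartition n x) :
    (∀ a : Fin n, ¬ IsIsolatedPt n x a) ↔
      ∃ S : Set (Set (Fin n)), (∀ U ∈ S, U.Nonempty ∧ U ≠ Set.univ) ∧
        x = tcl (⋃ U ∈ S, (Uᶜ ×ˢ U)) := by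
  obtain ⟨hxt, hyt⟩ := hx
  constructor
  · intro hni
    refine ⟨{U | U.Nonempty ∧ U ≠ Set.univ ∧ Uᶜ ×ˢ U ⊆ x},
      fun U hU => ⟨hU.1, hU.2.1⟩, ?_⟩
    have hsub : (⋃ U ∈ {U : Set (Fin n) | U.Nonempty ∧ U ≠ Set.univ ∧ Uᶜ ×ˢ U ⊆ x},
        (Uᶜ ×ˢ U)) ⊆ x := by
      rintro p hp
      simp only [Set.mem_iUnion] at hp
      obtain ⟨U, hU, hpU⟩ := hp
      exact hU.2.2 hpU
    have hmem : ∀ a b : Fin n, (a, b) ∈ x → a ≠ b →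
        (a, b) ∈ ⋃ U ∈ {U : Set (Fin n) | U.Nonempty ∧ U ≠ Set.univ ∧ Uᶜ ×ˢ U ⊆ x},
          (Uᶜ ×ˢ U) := by
      intro a b hab hne
      obtain ⟨U, h1, h2, h3, h4, h5⟩ := cut_exists hyt hab hne
      simp only [Set.mem_iUnion]
      exact ⟨U, ⟨h1, h2, h3⟩, h4, h5⟩
    apply Set.Subset.antisymm
    · rintro ⟨a, b⟩ hab
      by_cases hne : a = b
      · subst hne
        have hna := hni a
        unfold IsIsolatedPt at hna
        push_neg at hna
        obtain ⟨c, hc⟩ := hna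
        rcases hc with ⟨⟨h1, h2⟩, hcne⟩ | ⟨h1, rfl⟩
        · exact Relation.TransGen.head (hmem a c h1 (Ne.symm hcne))
            (Relation.TransGen.single (hmem c a h2 hcne))
        · exact absurd hab (h1 hab)
      · exact Relation.TransGen.single (hmem a b hab hne)
    · exact tcl_subset_of_trans hsub hxt
  · rintro ⟨S, hS, rfl⟩ a ha
    have hdiag : Relation.TransGen (fun u v => (u, v) ∈ ⋃ U ∈ S, (Uᶜ ×ˢ U)) a a :=
      ((ha a).2 rfl).1
    have hnot : (a, a) ∉ ⋃ U ∈ S, (Uᶜ ×ˢ U) := by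
      simp only [Set.mem_iUnion, not_exists]
      rintro U hU ⟨h1, h2⟩
      exact h1 h2
    obtain ⟨c, h1, h2⟩ := Relation.TransGen.head'_iff.mp hdiag
    rcases Relation.reflTransGen_iff_eq_or_transGen.mp h2 with rfl | h2'
    · exact hnot h1
    · have hac : (a, c) ∈ tcl (⋃ U ∈ S, (Uᶜ ×ˢ U)) := Relation.TransGen.single h1
      have hca : (c, a) ∈ tcl (⋃ U ∈ S, (Uᶜ ×ˢ U)) := h2'
      have hceq : c = a := (ha c).1 ⟨hac, hca⟩
      exact hnot (hceq ▸ h1)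
end
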